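/- Assume ω₁ < 𝔟. Then every K-analytic topological space X in which every compact subset is at most countable is itself at most countable. -/

import Mathlib

open Cardinal Set Topology

universe u

def FunctionallyHausdorff (X : Type u) [TopologicalSpace X] : Prop :=
  ∀ x y : X, x ≠ y → ∃ f : X → unitInterval, Continuous f ∧ f x = 0 ∧ f y = 1

def IsCechComplete (X : Type u) [TopologicalSpace X] : Prop :=
  ∃ (K : Type u) (_ : TopologicalSpace K) (e : X → K),
    CompactSpace K ∧ T2Space K ∧ IsEmbedding e ∧ DenseRange e ∧ IsGδ (Set.range e)

noncomputable def lindelofNumber (X : Type u) [TopologicalSpace X] : Cardinal.{u} :=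
  sInf {κ : Cardinal.{u} | ℵ₀ ≤ κ ∧ ∀ U : Set (Set X), (∀ u ∈ U, IsOpen u) → ⋃₀ U = Set.univ →
    ∃ V ⊆ U, #↥V ≤ κ ∧ ⋃₀ V = Set.univ}

noncomputable def pseudocharacter (X : Type u) [TopologicalSpace X] : Cardinal.{u} :=
  sInf {κ : Cardinal.{u} | ℵ₀ ≤ κ ∧ ∀ x : X, ∃ 𝒰 : Set (Set X),
    #↥𝒰 ≤ κ ∧ (∀ U ∈ 𝒰, IsOpen U ∧ x ∈ U) ∧ ⋂₀ 𝒰 = ⋂₀ {U : Set X | IsOpen U ∧ x ∈ U}}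

def IsScatteredSet {X : Type u} [TopologicalSpace X] (S : Set X) : Prop :=
  ∀ T ⊆ S, T.Nonempty → ∃ x ∈ T, ∃ U : Set X, IsOpen U ∧ U ∩ T = {x}

def IsKAnalytic (X : Type u) [TopologicalSpace X] : Prop :=
  ∃ (P : Type u) (_ : TopologicalSpace P) (f : P → X),
    LindelofSpace P ∧ IsCechComplete P ∧ Continuous f ∧ Function.Surjective f

def IsAnalyticSpace (X : Type u) [TopologicalSpace X] : Prop :=
  ∃ (P : Type u) (_ : TopologicalSpace P), PolishSpace P ∧
    ∃ f : P → X, Continuous f ∧ Function.Surjective f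

noncomputable def boundingNumber : Cardinal.{0} :=
  sInf {κ : Cardinal.{0} | ∃ B : Set (ℕ → ℕ), #↥B = κ ∧
    ∀ y : ℕ → ℕ, ∃ x ∈ B, {n : ℕ | ¬ x n ≤ y n}.Infinite}

private lemma stmt8_aux (hb : Cardinal.aleph 1 < boundingNumber)
    {X : Type u} [TopologicalSpace X] {P : Type u} [TopologicalSpace P]
    {K : Type u} [TopologicalSpace K] (f : P → X) (e : P → K)
    (hLin : LindelofSpace P) (hK : CompactSpace K) (hT2 : T2Space K)
    (hemb : IsEmbedding e) (hGδ : IsGδ (Set.range e))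
    (hfc : Continuous f) (hfs : Function.Surjective f)
    (hc : ∀ C : Set X, IsCompact C → C.Countable) :
    Countable X := by
  rcases isEmpty_or_nonempty P with hP | hP
  · have : IsEmpty X := ⟨fun x => (hfs x).elim (fun p _ => hP.elim p)⟩
    infer_instance
  -- Gδ structure
  obtain ⟨T, hTopen, hTc, hTe⟩ := hGδ
  obtain ⟨G, hG⟩ := (hTc.insert Set.univ).exists_eq_range ⟨Set.univ, mem_insert _ _⟩
  have hGopen : ∀ n, IsOpen (G n) := by
    intro n
    have : G n ∈ insert (Set.univ : Set K) T := hG ▸ mem_range_self n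
    rcases this with h | h
    · rw [h]; exact isOpen_univ
    · exact hTopen _ h
  have hrangeE : range e = ⋂ n, G n := by
    rw [← sInter_range, ← hG, sInter_insert, univ_inter, hTe]
  -- regular neighborhoods
  have key : ∀ (n : ℕ) (p : P), ∃ V : Set K, IsOpen V ∧ e p ∈ V ∧ closure V ⊆ G n := by
    intro n p
    have hmem : e p ∈ G n := by
      have : e p ∈ ⋂ n, G n := hrangeE ▸ mem_range_self p
      exact mem_iInter.1 this n
    obtain ⟨t, ht, htc, hts⟩ := exists_mem_nhds_isClosed_subset ((hGopen n).mem_nhds hmem)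
    exact ⟨interior t, isOpen_interior, mem_interior_iff_mem_nhds.2 ht,
      (closure_minimal interior_subset htc).trans hts⟩
  choose V hVopen hVmem hVcl using key
  -- Lindelöf countable subcovers
  have cover : ∀ n : ℕ, ∃ g : ℕ → P, ∀ p : P, ∃ m, e p ∈ V n (g m) := by
    intro n
    have hsub : (univ : Set P) ⊆ ⋃ p, e ⁻¹' (V n p) :=
      fun p _ => mem_iUnion.2 ⟨p, hVmem n p⟩
    obtain ⟨r, hrc, hrcov⟩ := isLindelof_univ.elim_countable_subcover
      (fun p => e ⁻¹' (V n p)) (fun p => (hVopen n p).preimage hemb.continuous) hsub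
    obtain ⟨p0⟩ := hP
    have hrne : r.Nonempty := by
      rcases mem_iUnion₂.1 (hrcov (mem_univ p0)) with ⟨q, hq, _⟩
      exact ⟨q, hq⟩
    obtain ⟨g, hg⟩ := hrc.exists_eq_range hrne
    refine ⟨g, fun p => ?_⟩
    rcases mem_iUnion₂.1 (hrcov (mem_univ p)) with ⟨q, hq, hpq⟩
    rw [hg] at hq
    rcases hq with ⟨m, rfl⟩
    exact ⟨m, hpq⟩
  choose g hg using cover
  set W : ℕ → ℕ → Set K := fun n m => V n (g n m) with hW
  have hWcl : ∀ n m, closure (W n m) ⊆ G n := fun n m => hVcl n (g n m)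
  choose σ hσ using fun p n => hg n p
  -- σ : P → ℕ → ℕ with e p ∈ W n (σ p n)
  -- compact pieces
  set C : (ℕ → ℕ) → Set K := fun z => ⋂ n, ⋃ m ∈ Finset.range (z n + 1), closure (W n m) with hC
  have hCclosed : ∀ z, IsClosed (C z) := by
    intro z
    refine isClosed_iInter fun n => ?_
    exact (Finset.range (z n + 1)).finite_toSet.isClosed_biUnion fun m _ => isClosed_closure
  have hCsub : ∀ z, C z ⊆ range e := by
    intro z q hq
    rw [hrangeE, mem_iInter]
    intro n
    have := mem_iInter.1 hq n
    rcases mem_iUnion₂.1 this with ⟨m, _, hm⟩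
    exact hWcl n m hm
  have hCcomp : ∀ z, IsCompact (e ⁻¹' C z) := by
    intro z
    rw [hemb.isCompact_iff]
    rw [image_preimage_eq_inter_range, inter_eq_self_of_subset_left (hCsub z)]
    exact (hCclosed z).isCompact
  have hXcount : ∀ z, (f '' (e ⁻¹' C z)).Countable := fun z =>
    hc _ ((hCcomp z).image hfc)
  have hmemC : ∀ (p : P) (z : ℕ → ℕ), (∀ n, σ p n ≤ z n) → f p ∈ f '' (e ⁻¹' C z) := by
    intro p z hz
    refine mem_image_of_mem f ?_
    simp only [mem_preimage, hC, mem_iInter]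
    intro n
    exact mem_iUnion₂.2 ⟨σ p n, Finset.mem_range.2 (Nat.lt_succ_of_le (hz n)),
      subset_closure (hσ p n)⟩
  -- main contradiction
  by_contra hX
  have hX1 : ℵ₁ ≤ #X := by
    have h0 : ℵ₀ < #X := not_le.1 (fun h => hX (Cardinal.mk_le_aleph0_iff.1 h))
    rw [← succ_aleph0]
    exact Order.succ_le_of_lt h0
  obtain ⟨j⟩ : Nonempty ((Cardinal.aleph 1).out ↪ X) := by
    rw [← Cardinal.lift_mk_le', Cardinal.mk_out, Cardinal.lift_uzero,
      Cardinal.lift_aleph, Ordinal.lift_one]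
    exact hX1
  choose pw hpw using fun w => hfs (j w)
  set B : Set (ℕ → ℕ) := range (fun w => σ (pw w)) with hB
  have hBcard : #B ≤ Cardinal.aleph 1 := mk_range_le.trans_eq (Cardinal.mk_out _)
  have hbound : ∃ y : ℕ → ℕ, ∀ x ∈ B, {n | ¬ x n ≤ y n}.Finite := by
    by_contra hun
    push_neg at hun
    have hBmem : boundingNumber ≤ #B :=
      csInf_le' ⟨B, rfl, fun y => by
        rcases hun y with ⟨x, hx1, hx2⟩
        refine ⟨x, hx1, ?_⟩
        simp only [not_le]
        exact hx2⟩
    exact absurd ((hb.trans_le hBmem).trans_le hBcard) (lt_irrefl _)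
  obtain ⟨y, hy⟩ := hbound
  -- countable union covering all j w
  set S : Set X := ⋃ t : List ℕ, f '' (e ⁻¹' C (fun n => max (y n) (t.getD n 0))) with hS
  have hScount : S.Countable := countable_iUnion fun t => hXcount _
  have hjS : ∀ w, j w ∈ S := by
    intro w
    have hfin : {n | ¬ σ (pw w) n ≤ y n}.Finite := hy _ (mem_range_self w)
    obtain ⟨N, hN⟩ := hfin.bddAbove
    have hle : ∀ n, N < n → σ (pw w) n ≤ y n := by
      intro n hn
      by_contra hcon
      exact absurd (hN hcon) (not_le.2 hn)
    refine mem_iUnion.2 ⟨List.ofFn (fun i : Fin (N + 1) => σ (pw w) i), ?_⟩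
    rw [← hpw w]
    refine hmemC _ _ fun n => ?_
    rcases le_or_gt n N with h | h
    · have hlen : n < (List.ofFn (fun i : Fin (N + 1) => σ (pw w) i)).length := by
        simpa using Nat.lt_succ_of_le h
      rw [List.getD_eq_getElem _ _ hlen, List.getElem_ofFn]
      exact le_max_of_le_right (le_refl _)
    · exact le_max_of_le_left (hle n h)
  have hcnt : Countable ((Cardinal.aleph 1).out) := by
    haveI := hScount.to_subtype
    exact Function.Injective.countable
      (f := fun w => (⟨j w, hjS w⟩ : ↥S))
      (fun a b hab => j.injective (congrArg Subtype.val hab))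
  have hle : (Cardinal.aleph 1 : Cardinal.{0}) ≤ ℵ₀ := by
    rw [← Cardinal.mk_out (Cardinal.aleph 1)]
    exact Cardinal.mk_le_aleph0_iff.2 hcnt
  exact absurd hle (not_le.2 Cardinal.aleph0_lt_aleph_one)


theorem stmt8 (hb : Cardinal.aleph 1 < boundingNumber)
    {X : Type u} [TopologicalSpace X] (hKA : IsKAnalytic X)
    (hc : ∀ K : Set X, IsCompact K → K.Countable) :
    Countable X := by
  obtain ⟨P, tP, f, hLin, hCC, hfc, hfs⟩ := hKA
  obtain ⟨K, tK, e, hK, hT2, hemb, -, hGδ⟩ := hCC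
  exact stmt8_aux hb f e hLin hK hT2 hemb hGδ hfc hfs hc
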